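/- Let K be a commutative ring, (kₙ)_{n≥1} a sequence in K, and define (mₙ)_{n≥0} by m₀ = 1 and, for n ≥ 1, mₙ = Σ_{s=1}^{n} Σ_{i₁+⋯+i_s = n−s, i_j ≥ 0} k_s · m_{i₁}⋯m_{i_s}. Then for all n ≥ 1, mₙ = Σ_{L ∈ NC_n} ∏_{B block of L} k_{|B|} (the free moment–cumulant relation). -/
import Mathlib


open scoped TensorProduct

/-- The data of a collection of blocks (finite sets of natural numbers). -/
abbrev PartData : Type := Finset (Finset ℕ)

/-- The non-crossing condition on a collection of blocks: there are no
`p₁ < q₁ < p₂ < q₂` with `p₁, p₂` in one block and `q₁, q₂` in a different block. -/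
def NoCrossing (P : PartData) : Prop :=
  ∀ B ∈ P, ∀ B' ∈ P, B ≠ B' →
    ∀ p₁ ∈ B, ∀ p₂ ∈ B, ∀ q₁ ∈ B', ∀ q₂ ∈ B',
      ¬ (p₁ < q₁ ∧ q₁ < p₂ ∧ p₂ < q₂)

instance (P : PartData) : Decidable (NoCrossing P) := by
  unfold NoCrossing; exact inferInstance

/-- `NestedIn B B'` is the relation `B <_L B'`: every element of `B` lies strictly
between `min B'` and `max B'`. -/
def NestedIn (B B' : Finset ℕ) : Prop :=
  ∀ m ∈ B, (∃ a ∈ B', a < m) ∧ (∃ b ∈ B', m < b)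

instance (B B' : Finset ℕ) : Decidable (NestedIn B B') := by
  unfold NestedIn; exact inferInstance

/-- Admissibility of a decomposition of the blocks into `Q` and `U`:
no block of `Q` is `<_L` any block of `U`. -/
def Adm (Q U : PartData) : Prop := ∀ q ∈ Q, ∀ u ∈ U, ¬ NestedIn q u

instance (Q U : PartData) : Decidable (Adm Q U) := by
  unfold Adm; exact inferInstance

/-- `P` is a non-crossing set partition of `{0, 1, …, n-1}`. -/
def IsNCP (n : ℕ) (P : PartData) : Prop :=
  ∅ ∉ P ∧ (∀ B ∈ P, ∀ B' ∈ P, B ≠ B' → Disjoint B B') ∧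
    P.sup id = Finset.range n ∧ NoCrossing P

instance (n : ℕ) (P : PartData) : Decidable (IsNCP n P) := by
  unfold IsNCP; exact inferInstance

/-- The rank of `x` in `S` (the standardization map: the unique increasing
bijection from `S` onto `{0, …, |S|-1}`). -/
def rk (S : Finset ℕ) (x : ℕ) : ℕ := (S.filter (· < x)).card

/-- Standardization of a collection of blocks, via the rank map of its ground set. -/
def stdParts (P : PartData) : PartData := P.image fun B => B.image (rk (P.sup id))

/-- The connected component of `x` in `T` relative to the separating set `S`. -/
def compOf (S T : Finset ℕ) (x : ℕ) : Finset ℕ :=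
  T.filter fun y => ∀ s ∈ S, ¬ (min x y < s ∧ s < max x y)

/-- The ordered list of connected components of `T` relative to the separating set `S`. -/
def comps (S T : Finset ℕ) : List (Finset ℕ) :=
  ((T.sort (· ≤ ·)).map (compOf S T)).dedup

/-- The finite set of all non-crossing partitions of `{0, …, n-1}`. -/
def NCset (n : ℕ) : Finset PartData :=
  ((Finset.range n).powerset.powerset).filter (IsNCP n)
namespace FMC

lemma block_subset {n : ℕ} {P : PartData} (h : IsNCP n P) {B : Finset ℕ} (hB : B ∈ P) :
    B ⊆ Finset.range n := by
  have := Finset.le_sup (f := id) hB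
  rw [h.2.2.1] at this
  exact this

lemma mem_NCset {n : ℕ} {P : PartData} : P ∈ NCset n ↔ IsNCP n P := by
  constructor
  · exact fun h => (Finset.mem_filter.1 h).2
  · intro h
    refine Finset.mem_filter.2 ⟨Finset.mem_powerset.2 ?_, h⟩
    intro B hB
    exact Finset.mem_powerset.2 (block_subset h hB)

lemma NCset_zero : NCset 0 = {∅} := by decide

lemma exists_between' (f : ℕ → ℕ) (x : ℕ) : ∀ k : ℕ, f 0 ≤ x → x < f k →
    ∃ j, j < k ∧ f j ≤ x ∧ x < f (j + 1) := by
  intro k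
  induction k with
  | zero => intro h0 hk; omega
  | succ k ih =>
    intro h0 hk
    by_cases hx : x < f k
    · obtain ⟨j, hj⟩ := ih h0 hx
      exact ⟨j, by omega, hj.2⟩
    · exact ⟨k, by omega, by omega, hk⟩

/-- the block of `P` containing `0`. -/
def blk0 (P : PartData) : Finset ℕ := (P.filter (fun B => 0 ∈ B)).sup id

lemma blk0_eq {n : ℕ} {P : PartData} (h : IsNCP n P) {B : Finset ℕ}
    (hB : B ∈ P) (h0 : 0 ∈ B) : blk0 P = B := by
  have hfil : P.filter (fun B => 0 ∈ B) = {B} := by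
    apply Finset.ext
    intro C
    simp only [Finset.mem_filter, Finset.mem_singleton]
    constructor
    · rintro ⟨hC, hC0⟩
      by_contra hne
      exact Finset.disjoint_left.1 (h.2.1 C hC B hB hne) hC0 h0
    · rintro rfl; exact ⟨hB, h0⟩
  rw [blk0, hfil, Finset.sup_singleton, id]

lemma blk0_spec {n : ℕ} {P : PartData} (h : IsNCP n P) (hn : 1 ≤ n) :
    blk0 P ∈ P ∧ 0 ∈ blk0 P := by
  have h0 : (0 : ℕ) ∈ P.sup id := by
    rw [h.2.2.1]; exact Finset.mem_range.2 hn
  obtain ⟨B, hB, hB0⟩ := Finset.mem_sup.1 h0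
  rw [blk0_eq h hB hB0]
  exact ⟨hB, hB0⟩


variable {s : ℕ}

/-- extension of a `Fin s`-tuple by zero -/
def tte (s : ℕ) (t : Fin s → ℕ) (j : ℕ) : ℕ := if h : j < s then t ⟨j, h⟩ else 0

/-- the boundary points -/
def bb (s : ℕ) (t : Fin s → ℕ) (j : ℕ) : ℕ := j + ∑ i ∈ Finset.range j, tte s t i

lemma bb_zero (t : Fin s → ℕ) : bb s t 0 = 0 := by simp [bb]

lemma bb_succ (t : Fin s → ℕ) (j : ℕ) : bb s t (j + 1) = bb s t j + tte s t j + 1 := by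
  simp [bb, Finset.sum_range_succ]; ring

lemma bb_strictMono (t : Fin s → ℕ) : StrictMono (bb s t) := by
  apply strictMono_nat_of_lt_succ
  intro j; rw [bb_succ]; omega

lemma bb_last {n : ℕ} (t : Fin s → ℕ) (hsum : ∑ j, t j = n - s) (hs : s ≤ n) :
    bb s t s = n := by
  have : ∑ i ∈ Finset.range s, tte s t i = ∑ j : Fin s, t j := by
    rw [← Fin.sum_univ_eq_sum_range (tte s t) s]
    apply Finset.sum_congr rfl
    intro j _
    simp [tte, j.isLt]
  rw [bb, this, hsum]; omega

lemma tte_eq (t : Fin s → ℕ) (j : Fin s) : tte s t j = t j := by simp [tte, j.isLt]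

/-- the interval boundary block -/
def B0A (s : ℕ) (t : Fin s → ℕ) : Finset ℕ := (Finset.range s).image (bb s t)

/-- shift a collection of blocks up by `c` -/
def shiftP (c : ℕ) (Q : PartData) : PartData := Q.image (fun B => B.image (· + c))

/-- assembled partition -/
def asm (s : ℕ) (t : Fin s → ℕ) (p : Fin s → PartData) : PartData :=
  insert (B0A s t) (Finset.univ.biUnion fun j : Fin s => shiftP (bb s t j + 1) (p j))

-- NEW material
section Ctx
variable {n s : ℕ} {t : Fin s → ℕ} {p : Fin s → PartData}

lemma block_subset' {m : ℕ} {Q : PartData} (h : IsNCP m Q) {B : Finset ℕ} (hB : B ∈ Q) :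
    B ⊆ Finset.range m := by
  have := Finset.le_sup (f := id) hB
  rw [h.2.2.1] at this
  exact this

lemma mem_shiftP {c : ℕ} {Q : PartData} {C : Finset ℕ} :
    C ∈ shiftP c Q ↔ ∃ B ∈ Q, B.image (· + c) = C := Finset.mem_image

lemma mem_asm {C : Finset ℕ} :
    C ∈ asm s t p ↔ C = B0A s t ∨ ∃ j : Fin s, C ∈ shiftP (bb s t j + 1) (p j) := by
  simp [asm, Finset.mem_insert, Finset.mem_biUnion]

lemma shift_subset_gap (j : Fin s) (hp : IsNCP (t j) (p j)) {B : Finset ℕ} (hB : B ∈ p j) :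
    B.image (· + (bb s t j + 1)) ⊆ Finset.Ioo (bb s t j) (bb s t (j + 1)) := by
  intro x hx
  obtain ⟨a, ha, rfl⟩ := Finset.mem_image.1 hx
  have ha' : a < t j := Finset.mem_range.1 (block_subset' hp hB ha)
  have := bb_succ t (j : ℕ)
  have := tte_eq t j
  rw [Finset.mem_Ioo]
  omega

lemma shiftP_mem_subset_gap {j : Fin s} (hp : IsNCP (t j) (p j)) {C : Finset ℕ}
    (hC : C ∈ shiftP (bb s t j + 1) (p j)) :
    C ⊆ Finset.Ioo (bb s t j) (bb s t (j + 1)) ∧ C.Nonempty := by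
  obtain ⟨B, hB, rfl⟩ := mem_shiftP.1 hC
  refine ⟨shift_subset_gap j hp hB, ?_⟩
  have : B.Nonempty := Finset.nonempty_iff_ne_empty.2 (by rintro rfl; exact hp.1 hB)
  exact this.image _

lemma gap_disjoint {j j' : ℕ} (h : j ≠ j') :
    Disjoint (Finset.Ioo (bb s t j) (bb s t (j + 1))) (Finset.Ioo (bb s t j') (bb s t (j' + 1))) := by
  rw [Finset.disjoint_left]
  intro x hx hx'
  rw [Finset.mem_Ioo] at hx hx'
  rcases Nat.lt_or_ge j j' with hlt | hge
  · have : bb s t (j + 1) ≤ bb s t j' := (bb_strictMono t).monotone (by omega)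
    omega
  · have : bb s t (j' + 1) ≤ bb s t j := (bb_strictMono t).monotone (by omega)
    omega

lemma bb_notMem_gap {i j : ℕ} : bb s t i ∉ Finset.Ioo (bb s t j) (bb s t (j + 1)) := by
  rw [Finset.mem_Ioo]
  intro ⟨h1, h2⟩
  have := (bb_strictMono t).lt_iff_lt.1 h1
  have := (bb_strictMono t).lt_iff_lt.1 h2
  omega

lemma zero_mem_B0A (hs1 : 1 ≤ s) : 0 ∈ B0A s t := by
  rw [B0A, Finset.mem_image]
  exact ⟨0, Finset.mem_range.2 hs1, bb_zero t⟩

lemma B0A_ne_shift {j : Fin s} (hs1 : 1 ≤ s) (hp : IsNCP (t j) (p j)) {C : Finset ℕ}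
    (hC : C ∈ shiftP (bb s t j + 1) (p j)) : B0A s t ≠ C := by
  intro h
  have h0 := zero_mem_B0A (t := t) hs1
  rw [h] at h0
  have := (shiftP_mem_subset_gap hp hC).1 h0
  rw [Finset.mem_Ioo] at this
  omega

lemma card_B0A : (B0A s t).card = s := by
  rw [B0A, Finset.card_image_of_injOn ((bb_strictMono t).injective.injOn), Finset.card_range]

end Ctx
section Ctx2
variable {n s : ℕ} {t : Fin s → ℕ} {p : Fin s → PartData}

lemma isNCP_asm (hs1 : 1 ≤ s) (hsn : s ≤ n) (hsum : ∑ j, t j = n - s)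
    (hp : ∀ j, IsNCP (t j) (p j)) : IsNCP n (asm s t p) := by
  have hlast : bb s t s = n := bb_last t hsum hsn
  refine ⟨?_, ?_, ?_, ?_⟩
  · -- no empty block
    intro hmem
    rcases mem_asm.1 hmem with h | ⟨j, hj⟩
    · exact absurd (h ▸ zero_mem_B0A (t := t) hs1) (Finset.notMem_empty 0)
    · exact absurd (shiftP_mem_subset_gap (hp j) hj).2 (by simp)
  · -- pairwise disjoint
    intro B hB B' hB' hne
    rcases mem_asm.1 hB with rfl | ⟨j, hj⟩
    · rcases mem_asm.1 hB' with rfl | ⟨j', hj'⟩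
      · exact absurd rfl hne
      · rw [Finset.disjoint_left]
        intro x hx hx'
        obtain ⟨i, _, rfl⟩ := Finset.mem_image.1 hx
        exact bb_notMem_gap ((shiftP_mem_subset_gap (hp j') hj').1 hx')
    · rcases mem_asm.1 hB' with rfl | ⟨j', hj'⟩
      · rw [Finset.disjoint_right]
        intro x hx hx'
        obtain ⟨i, _, rfl⟩ := Finset.mem_image.1 hx
        exact bb_notMem_gap ((shiftP_mem_subset_gap (hp j) hj).1 hx')
      · by_cases hjj : j = j'
        · subst hjj
          obtain ⟨B₁, hB₁, rfl⟩ := mem_shiftP.1 hj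
          obtain ⟨B₂, hB₂, rfl⟩ := mem_shiftP.1 hj'
          have h12 : B₁ ≠ B₂ := fun h => hne (by rw [h])
          exact (Finset.disjoint_image (add_left_injective _)).2
            ((hp j).2.1 B₁ hB₁ B₂ hB₂ h12)
        · exact Finset.disjoint_of_subset_left ((shiftP_mem_subset_gap (hp j) hj).1)
            (Finset.disjoint_of_subset_right ((shiftP_mem_subset_gap (hp j') hj').1)
              (gap_disjoint (by exact_mod_cast fun h => hjj (Fin.ext h))))
  · -- sup = range n
    apply Finset.ext
    intro x
    rw [Finset.mem_sup, Finset.mem_range]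
    constructor
    · rintro ⟨B, hB, hx⟩
      rcases mem_asm.1 hB with rfl | ⟨j, hj⟩
      · obtain ⟨i, hi, rfl⟩ := Finset.mem_image.1 hx
        rw [Finset.mem_range] at hi
        have := bb_strictMono t hi
        simp only [id] at *
        omega
      · have := (shiftP_mem_subset_gap (hp j) hj).1 hx
        rw [Finset.mem_Ioo] at this
        have h2 : bb s t ((j : ℕ) + 1) ≤ bb s t s := (bb_strictMono t).monotone j.isLt
        simp only [id] at *
        omega
    · intro hx
      by_cases hB0 : x ∈ B0A s t
      · exact ⟨B0A s t, mem_asm.2 (Or.inl rfl), hB0⟩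
      · obtain ⟨j, hjs, hj1, hj2⟩ := exists_between' (bb s t) x s
          (by rw [bb_zero]; omega) (by omega)
        have hne : bb s t j ≠ x := fun h =>
          hB0 (Finset.mem_image.2 ⟨j, Finset.mem_range.2 hjs, h⟩)
        set a := x - (bb s t j + 1) with ha
        have htj : tte s t j = t ⟨j, hjs⟩ := by simp [tte, hjs]
        have haj : a < t ⟨j, hjs⟩ := by
          have := bb_succ t j
          omega
        have : a ∈ (p ⟨j, hjs⟩).sup id := by
          rw [(hp ⟨j, hjs⟩).2.2.1]
          exact Finset.mem_range.2 haj
        obtain ⟨B, hB, haB⟩ := Finset.mem_sup.1 this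
        refine ⟨B.image (· + (bb s t j + 1)), mem_asm.2 (Or.inr ⟨⟨j, hjs⟩, ?_⟩), ?_⟩
        · exact mem_shiftP.2 ⟨B, hB, rfl⟩
        · exact Finset.mem_image.2 ⟨a, haB, by omega⟩
  · -- non-crossing
    intro B hB B' hB' hne p₁ hp₁ p₂ hp₂ q₁ hq₁ q₂ hq₂ ⟨h1, h2, h3⟩
    rcases mem_asm.1 hB with rfl | ⟨j, hj⟩
    · rcases mem_asm.1 hB' with rfl | ⟨j', hj'⟩
      · exact hne rfl
      · -- p's in B0A, q's in gap j'
        have hgap := (shiftP_mem_subset_gap (hp j') hj').1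
        have hq1 := Finset.mem_Ioo.1 (hgap hq₁)
        have hq2 := Finset.mem_Ioo.1 (hgap hq₂)
        obtain ⟨i, _, rfl⟩ := Finset.mem_image.1 hp₂
        exact bb_notMem_gap (s := s) (t := t) (i := i) (j := (j' : ℕ)) (Finset.mem_Ioo.2 ⟨by omega, by omega⟩)
    · rcases mem_asm.1 hB' with rfl | ⟨j', hj'⟩
      · have hgap := (shiftP_mem_subset_gap (hp j) hj).1
        have hq1 := Finset.mem_Ioo.1 (hgap hp₁)
        have hq2 := Finset.mem_Ioo.1 (hgap hp₂)
        obtain ⟨i, _, rfl⟩ := Finset.mem_image.1 hq₁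
        exact bb_notMem_gap (s := s) (t := t) (i := i) (j := (j : ℕ)) (Finset.mem_Ioo.2 ⟨by omega, by omega⟩)
      · by_cases hjj : j = j'
        · subst hjj
          obtain ⟨B₁, hB₁, rfl⟩ := mem_shiftP.1 hj
          obtain ⟨B₂, hB₂, rfl⟩ := mem_shiftP.1 hj'
          have h12 : B₁ ≠ B₂ := fun h => hne (by rw [h])
          obtain ⟨a₁, ha₁, rfl⟩ := Finset.mem_image.1 hp₁
          obtain ⟨a₂, ha₂, rfl⟩ := Finset.mem_image.1 hp₂
          obtain ⟨b₁, hb₁, rfl⟩ := Finset.mem_image.1 hq₁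
          obtain ⟨b₂, hb₂, rfl⟩ := Finset.mem_image.1 hq₂
          exact (hp j).2.2.2 B₁ hB₁ B₂ hB₂ h12 a₁ ha₁ a₂ ha₂ b₁ hb₁ b₂ hb₂
            ⟨by omega, by omega, by omega⟩
        · have hg := (shiftP_mem_subset_gap (hp j) hj).1
          have hg' := (shiftP_mem_subset_gap (hp j') hj').1
          have hx1 := Finset.mem_Ioo.1 (hg hp₁)
          have hx2 := Finset.mem_Ioo.1 (hg hp₂)
          have hy1 := Finset.mem_Ioo.1 (hg' hq₁)
          rcases Nat.lt_or_ge (j : ℕ) (j' : ℕ) with hlt | hge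
          · have : bb s t ((j : ℕ) + 1) ≤ bb s t j' := (bb_strictMono t).monotone (by omega)
            omega
          · have hne' : (j : ℕ) ≠ (j' : ℕ) := fun h => hjj (Fin.ext h)
            have : bb s t ((j' : ℕ) + 1) ≤ bb s t j := (bb_strictMono t).monotone (by omega)
            omega

end Ctx2
section Ctx3
variable {n s : ℕ} {t : Fin s → ℕ} {p : Fin s → PartData}

lemma shiftP_pairwise_disjoint (hp : ∀ j, IsNCP (t j) (p j)) {j j' : Fin s} (hne : j ≠ j') :
    Disjoint (shiftP (bb s t j + 1) (p j)) (shiftP (bb s t j' + 1) (p j')) := by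
  rw [Finset.disjoint_left]
  intro C hC hC'
  obtain ⟨hsub, hne'⟩ := shiftP_mem_subset_gap (hp j) hC
  obtain ⟨hsub', -⟩ := shiftP_mem_subset_gap (hp j') hC'
  obtain ⟨x, hx⟩ := hne'
  exact Finset.disjoint_left.1 (gap_disjoint (fun h => hne (Fin.ext h))) (hsub hx) (hsub' hx)

lemma B0A_notMem_biUnion (hs1 : 1 ≤ s) (hp : ∀ j, IsNCP (t j) (p j)) :
    B0A s t ∉ Finset.univ.biUnion fun j : Fin s => shiftP (bb s t j + 1) (p j) := by
  rw [Finset.mem_biUnion]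
  rintro ⟨j, -, hj⟩
  exact B0A_ne_shift hs1 (hp j) hj rfl

lemma prod_shiftP {K : Type*} [CommMonoid K] (k : ℕ → K) (c : ℕ) (Q : PartData) :
    ∏ B ∈ shiftP c Q, k B.card = ∏ B ∈ Q, k B.card := by
  rw [shiftP, Finset.prod_image]
  · exact Finset.prod_congr rfl fun B _ => by
      rw [Finset.card_image_of_injective _ (add_left_injective c)]
  · intro B _ B' _ h
    exact Finset.image_injective (add_left_injective c) h

lemma prod_asm {K : Type*} [CommMonoid K] (k : ℕ → K) (hs1 : 1 ≤ s)
    (hp : ∀ j, IsNCP (t j) (p j)) :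
    ∏ B ∈ asm s t p, k B.card = k s * ∏ j : Fin s, ∏ B ∈ p j, k B.card := by
  rw [asm, Finset.prod_insert (B0A_notMem_biUnion hs1 hp), card_B0A,
    Finset.prod_biUnion (fun j _ j' _ hne => shiftP_pairwise_disjoint hp hne)]
  exact congrArg _ (Finset.prod_congr rfl fun j _ => prod_shiftP k _ _)

lemma unshift_shiftP (c : ℕ) (Q : PartData) :
    (shiftP c Q).image (fun B => B.image (· - c)) = Q := by
  rw [shiftP, Finset.image_image]
  have : ∀ B : Finset ℕ, ((fun B : Finset ℕ => B.image (· - c)) ∘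
      (fun B : Finset ℕ => B.image (· + c))) B = B := by
    intro B
    simp only [Function.comp_apply, Finset.image_image]
    have : ((· - c) ∘ (· + c)) = (id : ℕ → ℕ) := by
      funext x; simp
    rw [this, Finset.image_id]
  rw [show ((fun B : Finset ℕ => B.image (· - c)) ∘ (fun B : Finset ℕ => B.image (· + c)))
      = id from funext this, Finset.image_id]

lemma filter_asm (hs1 : 1 ≤ s) (hp : ∀ j, IsNCP (t j) (p j)) (j : Fin s) :
    (asm s t p).filter (· ⊆ Finset.Ioo (bb s t j) (bb s t ((j : ℕ) + 1)))
      = shiftP (bb s t j + 1) (p j) := by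
  apply Finset.ext
  intro C
  rw [Finset.mem_filter]
  constructor
  · rintro ⟨hC, hsub⟩
    rcases mem_asm.1 hC with rfl | ⟨j', hj'⟩
    · exfalso
      have := hsub (zero_mem_B0A hs1)
      rw [Finset.mem_Ioo] at this
      omega
    · obtain ⟨hsub', hne⟩ := shiftP_mem_subset_gap (hp j') hj'
      obtain ⟨x, hx⟩ := hne
      have hjj : j' = j := by
        by_contra hne2
        exact Finset.disjoint_left.1 (gap_disjoint (fun h => hne2 (Fin.ext h)))
          (hsub' hx) (hsub hx)
      exact hjj ▸ hj'
  · intro hC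
    exact ⟨mem_asm.2 (Or.inr ⟨j, hC⟩), (shiftP_mem_subset_gap (hp j) hC).1⟩

lemma blk0_asm (hs1 : 1 ≤ s) (hsn : s ≤ n) (hsum : ∑ j, t j = n - s)
    (hp : ∀ j, IsNCP (t j) (p j)) : blk0 (asm s t p) = B0A s t :=
  blk0_eq (isNCP_asm hs1 hsn hsum hp) (mem_asm.2 (Or.inl rfl)) (zero_mem_B0A hs1)

end Ctx3
section Fwd
/-- number of blocks of the block of 0 -/
def sF (P : PartData) : ℕ := (blk0 P).card
/-- elements of the block of 0, in increasing order -/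
def bF (P : PartData) (j : Fin (sF P)) : ℕ := (blk0 P).orderEmbOfFin rfl j
/-- extended version, with value `n` past the end -/
def bNF (n : ℕ) (P : PartData) (i : ℕ) : ℕ := if h : i < sF P then bF P ⟨i, h⟩ else n
/-- gap sizes -/
def tF (n : ℕ) (P : PartData) (j : Fin (sF P)) : ℕ := bNF n P ((j : ℕ) + 1) - bF P j - 1
/-- standardized gap partitions -/
def pF (n : ℕ) (P : PartData) (j : Fin (sF P)) : PartData :=
  (P.filter (· ⊆ Finset.Ioo (bF P j) (bNF n P ((j : ℕ) + 1)))).image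
    (fun B => B.image (· - (bF P j + 1)))
/-- the decomposition map -/
def fwd (n : ℕ) (P : PartData) : (s : ℕ) × (_ : Fin s → ℕ) × (Fin s → PartData) :=
  ⟨sF P, tF n P, pF n P⟩

variable {n : ℕ} {P : PartData}

lemma bF_strictMono : StrictMono (bF P) := ((blk0 P).orderEmbOfFin rfl).strictMono

lemma bF_mem (j : Fin (sF P)) : bF P j ∈ blk0 P := Finset.orderEmbOfFin_mem _ rfl j

lemma bF_surj {x : ℕ} (hx : x ∈ blk0 P) : ∃ j, bF P j = x := by
  have : x ∈ Set.range ((blk0 P).orderEmbOfFin rfl) := by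
    rw [Finset.range_orderEmbOfFin]; exact_mod_cast hx
  exact this

section WithNCP
variable (h : IsNCP n P) (hn : 1 ≤ n)
include h hn

lemma sF_pos : 1 ≤ sF P :=
  Finset.card_pos.2 ⟨0, (blk0_spec h hn).2⟩

lemma sF_le : sF P ≤ n := by
  have := Finset.card_le_card (block_subset h (blk0_spec h hn).1)
  rwa [Finset.card_range] at this

lemma bF_lt (j : Fin (sF P)) : bF P j < n :=
  Finset.mem_range.1 (block_subset h (blk0_spec h hn).1 (bF_mem j))

lemma bF_zero : bF P ⟨0, sF_pos h hn⟩ = 0 := by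
  obtain ⟨j, hj⟩ := bF_surj (P := P) (blk0_spec h hn).2
  have h1 : bF P ⟨0, sF_pos h hn⟩ ≤ bF P j :=
    bF_strictMono.monotone (by simp [Fin.le_def])
  omega

omit h hn in
lemma bNF_of_lt {i : ℕ} (hi : i < sF P) : bNF n P i = bF P ⟨i, hi⟩ := dif_pos hi

lemma bNF_zero : bNF n P 0 = 0 := by
  rw [bNF_of_lt (by have := sF_pos h hn; omega : 0 < sF P)]
  exact bF_zero h hn

lemma bNF_lt_of_lt {i j : ℕ} (hij : i < j) (hj : j ≤ sF P) : bNF n P i < bNF n P j := by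
  have hi : i < sF P := by omega
  rw [bNF_of_lt hi]
  rcases Nat.lt_or_ge j (sF P) with hj' | hj'
  · rw [bNF_of_lt hj']
    exact bF_strictMono (by exact_mod_cast hij)
  · rw [bNF, dif_neg (by omega)]
    exact bF_lt h hn _

omit h hn in
lemma bNF_last : bNF n P (sF P) = n := by rw [bNF, dif_neg (by omega)]

lemma bNF_ge (i : ℕ) (hi : i ≤ sF P) : i ≤ bNF n P i := by
  induction i with
  | zero => omega
  | succ i ih =>
    have := ih (by omega)
    have := bNF_lt_of_lt h hn (lt_add_one i) hi
    omega

lemma sum_tF : ∑ j, tF n P j = n - sF P := by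
  have key : ∀ i ≤ sF P,
      ∑ j ∈ Finset.range i, (bNF n P (j + 1) - bNF n P j - 1) = bNF n P i - i := by
    intro i hi
    induction i with
    | zero => simp [bNF_zero h hn]
    | succ i ih =>
      rw [Finset.sum_range_succ, ih (by omega)]
      have h1 := bNF_lt_of_lt h hn (lt_add_one i) hi
      have h2 := bNF_ge h hn i (by omega)
      omega
  have h2 : ∀ j : Fin (sF P), tF n P j = bNF n P ((j : ℕ) + 1) - bNF n P (j : ℕ) - 1 := by
    intro j
    rw [tF]
    congr 2
    rw [bNF_of_lt j.isLt]
  calc ∑ j, tF n P j = ∑ j ∈ Finset.range (sF P), (bNF n P (j + 1) - bNF n P j - 1) := by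
        rw [← Fin.sum_univ_eq_sum_range (fun j => bNF n P (j + 1) - bNF n P j - 1) (sF P)]
        exact Finset.sum_congr rfl fun j _ => h2 j
    _ = n - sF P := by rw [key (sF P) le_rfl, bNF_last]

end WithNCP
end Fwd
section Gap
variable {n : ℕ} {P : PartData} (h : IsNCP n P) (hn : 1 ≤ n)
include h hn

lemma bNF_le_of_le {i j : ℕ} (hij : i ≤ j) (hj : j ≤ sF P) : bNF n P i ≤ bNF n P j := by
  rcases Nat.eq_or_lt_of_le hij with rfl | hlt
  · exact le_rfl
  · exact (bNF_lt_of_lt h hn hlt hj).le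

lemma bNF_le_n {i : ℕ} (hi : i ≤ sF P) : bNF n P i ≤ n := by
  have := bNF_le_of_le h hn hi le_rfl
  rwa [bNF_last] at this

omit h hn in
/-- no element of the block of 0 lies inside a gap -/
lemma notMem_blk0_of_mem_gap {j : Fin (sF P)} {x : ℕ}
    (hx : x ∈ Finset.Ioo (bF P j) (bNF n P ((j : ℕ) + 1))) : x ∉ blk0 P := by
  rw [Finset.mem_Ioo] at hx
  intro hmem
  obtain ⟨i, rfl⟩ := bF_surj hmem
  have h1 : (j : ℕ) < (i : ℕ) := by exact_mod_cast bF_strictMono.lt_iff_lt.1 hx.1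
  have h2 : (i : ℕ) < (j : ℕ) + 1 := by
    rcases Nat.lt_or_ge ((j : ℕ) + 1) (sF P) with hj1 | hj1
    · have : bF P i < bF P ⟨(j : ℕ) + 1, hj1⟩ := by
        rw [← bNF_of_lt hj1]; exact hx.2
      exact_mod_cast bF_strictMono.lt_iff_lt.1 this
    · have := i.isLt; omega
  omega

/-- the gaps are pairwise disjoint -/
lemma gapF_disjoint {j j' : Fin (sF P)} (hne : j ≠ j') :
    Disjoint (Finset.Ioo (bF P j) (bNF n P ((j : ℕ) + 1)))
      (Finset.Ioo (bF P j') (bNF n P ((j' : ℕ) + 1))) := by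
  rw [Finset.disjoint_left]
  intro x hx hx'
  rw [Finset.mem_Ioo] at hx hx'
  have hbj : bNF n P (j : ℕ) = bF P j := by rw [bNF_of_lt j.isLt]
  have hbj' : bNF n P (j' : ℕ) = bF P j' := by rw [bNF_of_lt j'.isLt]
  rcases Nat.lt_or_ge (j : ℕ) (j' : ℕ) with hlt | hge
  · have : bNF n P ((j : ℕ) + 1) ≤ bNF n P (j' : ℕ) :=
      bNF_le_of_le h hn (by omega) (by have := j'.isLt; omega)
    omega
  · have hne' : (j : ℕ) ≠ (j' : ℕ) := fun hh => hne (Fin.ext hh)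
    have : bNF n P ((j' : ℕ) + 1) ≤ bNF n P (j : ℕ) :=
      bNF_le_of_le h hn (by omega) (by have := j.isLt; omega)
    omega

/-- every block other than the block of 0 lies in a single gap -/
lemma block_in_gap {B : Finset ℕ} (hB : B ∈ P) (hne : B ≠ blk0 P) :
    ∃ j : Fin (sF P), B ⊆ Finset.Ioo (bF P j) (bNF n P ((j : ℕ) + 1)) := by
  have hblk := blk0_spec h hn
  have hdisj : Disjoint B (blk0 P) := h.2.1 B hB (blk0 P) hblk.1 hne
  have hBne : B.Nonempty := Finset.nonempty_iff_ne_empty.2 (by rintro rfl; exact h.1 hB)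
  set x₀ := B.min' hBne with hx₀
  have hx₀B : x₀ ∈ B := B.min'_mem hBne
  have hx₀n : x₀ < n := Finset.mem_range.1 (block_subset h hB hx₀B)
  have hx₀blk : x₀ ∉ blk0 P := Finset.disjoint_left.1 hdisj hx₀B
  have hx₀pos : 0 < x₀ := by
    rcases Nat.eq_zero_or_pos x₀ with hz | hp
    · exact absurd (hz ▸ hblk.2) (hz ▸ hx₀blk)
    · exact hp
  obtain ⟨j, hjs, hj1, hj2⟩ := exists_between' (bNF n P) x₀ (sF P)
    (by rw [bNF_zero h hn]; omega) (by rw [bNF_last]; omega)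
  have hbFj : bF P ⟨j, hjs⟩ = bNF n P j := (bNF_of_lt hjs).symm
  have hj1' : bF P ⟨j, hjs⟩ < x₀ := by
    rcases Nat.eq_or_lt_of_le hj1 with he | hl
    · exfalso; apply hx₀blk; rw [← he, ← hbFj]; exact bF_mem _
    · omega
  refine ⟨⟨j, hjs⟩, fun x hxB => ?_⟩
  rw [Finset.mem_Ioo]
  simp only [Fin.val_mk]
  have hx₀le : x₀ ≤ x := B.min'_le x hxB
  refine ⟨by omega, ?_⟩
  by_contra hge
  push_neg at hge
  have hxn : x < n := Finset.mem_range.1 (block_subset h hB hxB)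
  have hjs1 : j + 1 < sF P := by
    rcases Nat.lt_or_ge (j + 1) (sF P) with h1 | h1
    · exact h1
    · exfalso
      have hj1sf : j + 1 = sF P := by have := hjs; omega
      rw [hj1sf, bNF_last] at hge
      omega
  have hbmem : bNF n P (j + 1) ∈ blk0 P := by
    rw [bNF_of_lt hjs1]; exact bF_mem _
  have hxne : x ≠ bNF n P (j + 1) := by
    intro hh
    exact Finset.disjoint_left.1 hdisj hxB (hh ▸ hbmem)
  exact h.2.2.2 (blk0 P) hblk.1 B hB (fun hh => hne hh.symm)
    0 hblk.2 (bNF n P (j + 1)) hbmem x₀ hx₀B x hxB ⟨by omega, by omega, by omega⟩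

/-- every point of a gap is covered by a block contained in that gap -/
lemma gap_covered {j : Fin (sF P)} {x : ℕ}
    (hx : x ∈ Finset.Ioo (bF P j) (bNF n P ((j : ℕ) + 1))) :
    ∃ B ∈ P, x ∈ B ∧ B ⊆ Finset.Ioo (bF P j) (bNF n P ((j : ℕ) + 1)) := by
  have hxn : x < n := by
    have h1 := Finset.mem_Ioo.1 hx
    have h2 : bNF n P ((j : ℕ) + 1) ≤ n := bNF_le_n h hn (by have := j.isLt; omega)
    omega
  have : x ∈ P.sup id := by rw [h.2.2.1]; exact Finset.mem_range.2 hxn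
  obtain ⟨B, hB, hxB⟩ := Finset.mem_sup.1 this
  have hne : B ≠ blk0 P := by
    rintro rfl
    exact notMem_blk0_of_mem_gap hx hxB
  obtain ⟨j', hj'⟩ := block_in_gap h hn hB hne
  have : j' = j := by
    by_contra hne2
    exact Finset.disjoint_left.1 (gapF_disjoint h hn hne2) (hj' hxB) hx
  exact ⟨B, hB, hxB, this ▸ hj'⟩

end Gap
section PF
variable {n : ℕ} {P : PartData} (h : IsNCP n P) (hn : 1 ≤ n)
include h hn

lemma pF_isNCP (j : Fin (sF P)) : IsNCP (tF n P j) (pF n P j) := by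
  have hmemQ : ∀ {B : Finset ℕ}, B ∈ P.filter (· ⊆ Finset.Ioo (bF P j) (bNF n P ((j : ℕ) + 1)))
      → B ∈ P ∧ ∀ {a : ℕ}, a ∈ B → bF P j < a ∧ a < bNF n P ((j : ℕ) + 1) := by
    intro B hB
    have := Finset.mem_filter.1 hB
    exact ⟨this.1, fun ha => Finset.mem_Ioo.1 (this.2 ha)⟩
  have hpF : pF n P j = (P.filter (· ⊆ Finset.Ioo (bF P j) (bNF n P ((j : ℕ) + 1)))).image
      (fun B => B.image (· - (bF P j + 1))) := rfl
  refine ⟨?_, ?_, ?_, ?_⟩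
  · -- nonempty blocks
    rw [hpF]
    intro hmem
    obtain ⟨B, hBQ, him⟩ := Finset.mem_image.1 hmem
    have hBP := (hmemQ hBQ).1
    have : B.Nonempty := Finset.nonempty_iff_ne_empty.2 (by rintro rfl; exact h.1 hBP)
    obtain ⟨a, ha⟩ := this
    have : a - (bF P j + 1) ∈ (∅ : Finset ℕ) := him ▸ Finset.mem_image_of_mem _ ha
    exact absurd this (Finset.notMem_empty _)
  · -- pairwise disjoint
    rw [hpF]
    intro C hC C' hC' hne
    obtain ⟨B, hBQ, rfl⟩ := Finset.mem_image.1 hC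
    obtain ⟨B', hBQ', rfl⟩ := Finset.mem_image.1 hC'
    have hBB : B ≠ B' := fun hh => hne (by rw [hh])
    have hdisj := h.2.1 B (hmemQ hBQ).1 B' (hmemQ hBQ').1 hBB
    rw [Finset.disjoint_left]
    intro x hx hx'
    obtain ⟨a, ha, haeq⟩ := Finset.mem_image.1 hx
    obtain ⟨a', ha', haeq'⟩ := Finset.mem_image.1 hx'
    have h1 := (hmemQ hBQ).2 ha
    have h2 := (hmemQ hBQ').2 ha'
    have : a = a' := by omega
    exact Finset.disjoint_left.1 hdisj ha (this ▸ ha')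
  · -- sup = range
    apply Finset.ext
    intro x
    rw [Finset.mem_sup, Finset.mem_range]
    constructor
    · rintro ⟨C, hC, hx⟩
      rw [hpF] at hC
      obtain ⟨B, hBQ, rfl⟩ := Finset.mem_image.1 hC
      obtain ⟨a, ha, rfl⟩ := Finset.mem_image.1 hx
      have h1 := (hmemQ hBQ).2 ha
      rw [tF]
      omega
    · intro hx
      rw [tF] at hx
      have hxc : x + (bF P j + 1) ∈ Finset.Ioo (bF P j) (bNF n P ((j : ℕ) + 1)) := by
        rw [Finset.mem_Ioo]; omega
      obtain ⟨B, hBP, hxB, hBsub⟩ := gap_covered h hn hxc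
      refine ⟨B.image (· - (bF P j + 1)), ?_, ?_⟩
      · rw [hpF]
        exact Finset.mem_image_of_mem _ (Finset.mem_filter.2 ⟨hBP, hBsub⟩)
      · have : x + (bF P j + 1) - (bF P j + 1) = x := by omega
        exact this ▸ Finset.mem_image_of_mem _ hxB
  · -- non-crossing
    rw [hpF]
    intro C hC C' hC' hne p₁ hp₁ p₂ hp₂ q₁ hq₁ q₂ hq₂ ⟨h1, h2, h3⟩
    obtain ⟨B, hBQ, rfl⟩ := Finset.mem_image.1 hC
    obtain ⟨B', hBQ', rfl⟩ := Finset.mem_image.1 hC'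
    have hBB : B ≠ B' := fun hh => hne (by rw [hh])
    obtain ⟨a₁, ha₁, he₁⟩ := Finset.mem_image.1 hp₁
    obtain ⟨a₂, ha₂, he₂⟩ := Finset.mem_image.1 hp₂
    obtain ⟨b₁, hb₁, hf₁⟩ := Finset.mem_image.1 hq₁
    obtain ⟨b₂, hb₂, hf₂⟩ := Finset.mem_image.1 hq₂
    have g₁ := (hmemQ hBQ).2 ha₁
    have g₂ := (hmemQ hBQ).2 ha₂
    have g₃ := (hmemQ hBQ').2 hb₁
    have g₄ := (hmemQ hBQ').2 hb₂
    exact h.2.2.2 B (hmemQ hBQ).1 B' (hmemQ hBQ').1 hBB a₁ ha₁ a₂ ha₂ b₁ hb₁ b₂ hb₂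
      ⟨by omega, by omega, by omega⟩

end PF
section Inv

lemma sigma3_ext {s s' : ℕ} {t : Fin s → ℕ} {t' : Fin s' → ℕ}
    {p : Fin s → PartData} {p' : Fin s' → PartData} (hs : s = s')
    (ht : ∀ j : Fin s, t j = t' (Fin.cast hs j))
    (hp : ∀ j : Fin s, p j = p' (Fin.cast hs j)) :
    (⟨s, t, p⟩ : (s : ℕ) × (_ : Fin s → ℕ) × (Fin s → PartData)) = ⟨s', t', p'⟩ := by
  subst hs
  simp only [Fin.cast_refl, id] at ht hp
  rw [show t = t' from funext ht, show p = p' from funext hp]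

lemma shift_unshift (c : ℕ) (Q : PartData) (hQ : ∀ B ∈ Q, ∀ a ∈ B, c ≤ a) :
    shiftP c (Q.image (fun B => B.image (· - c))) = Q := by
  rw [shiftP, Finset.image_image]
  refine Eq.trans (Finset.image_congr ?_) Finset.image_id
  intro B hB
  simp only [Function.comp_apply, Finset.image_image, id]
  refine Eq.trans (Finset.image_congr ?_) Finset.image_id
  intro a ha
  have := hQ B hB a ha
  simp only [Function.comp_apply, id]
  omega

variable {n : ℕ} {P : PartData} (h : IsNCP n P) (hn : 1 ≤ n)
include h hn

lemma bb_tF {i : ℕ} (hi : i ≤ sF P) : bb (sF P) (tF n P) i = bNF n P i := by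
  induction i with
  | zero => rw [bb_zero, bNF_zero h hn]
  | succ i ih =>
    rw [bb_succ, ih (by omega)]
    have htte : tte (sF P) (tF n P) i = tF n P ⟨i, by omega⟩ := by
      simp [tte, show i < sF P by omega]
    have htF : tF n P ⟨i, by omega⟩ = bNF n P (i + 1) - bF P ⟨i, by omega⟩ - 1 := rfl
    have hbf : bF P ⟨i, by omega⟩ = bNF n P i := (bNF_of_lt (by omega)).symm
    have hlt := bNF_lt_of_lt h hn (lt_add_one i) hi
    omega

lemma B0A_fwd : B0A (sF P) (tF n P) = blk0 P := by
  apply Finset.ext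
  intro x
  rw [B0A, Finset.mem_image]
  constructor
  · rintro ⟨i, hi, rfl⟩
    rw [Finset.mem_range] at hi
    rw [bb_tF h hn (by omega), bNF_of_lt hi]
    exact bF_mem _
  · intro hx
    obtain ⟨i, rfl⟩ := bF_surj hx
    exact ⟨(i : ℕ), Finset.mem_range.2 i.isLt,
      by rw [bb_tF h hn (by have := i.isLt; omega), bNF_of_lt i.isLt]⟩

lemma shiftP_pF (j : Fin (sF P)) :
    shiftP (bb (sF P) (tF n P) (j : ℕ) + 1) (pF n P j)
      = P.filter (· ⊆ Finset.Ioo (bF P j) (bNF n P ((j : ℕ) + 1))) := by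
  have hbbj : bb (sF P) (tF n P) (j : ℕ) = bF P j := by
    rw [bb_tF h hn (by have := j.isLt; omega), bNF_of_lt j.isLt]
  rw [hbbj, pF]
  apply shift_unshift
  intro B hB a ha
  have := Finset.mem_Ioo.1 ((Finset.mem_filter.1 hB).2 ha)
  omega

lemma asm_fwd : asm (sF P) (tF n P) (pF n P) = P := by
  apply Finset.ext
  intro C
  rw [mem_asm]
  constructor
  · rintro (rfl | ⟨j, hj⟩)
    · rw [B0A_fwd h hn]; exact (blk0_spec h hn).1
    · rw [shiftP_pF h hn j] at hj
      exact (Finset.mem_filter.1 hj).1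
  · intro hC
    by_cases hCeq : C = blk0 P
    · left; rw [B0A_fwd h hn, hCeq]
    · right
      obtain ⟨j, hjsub⟩ := block_in_gap h hn hC hCeq
      exact ⟨j, by rw [shiftP_pF h hn j]; exact Finset.mem_filter.2 ⟨hC, hjsub⟩⟩

end Inv

section Inv2
variable {n s : ℕ} {t : Fin s → ℕ} {p : Fin s → PartData}
variable (hs1 : 1 ≤ s) (hsn : s ≤ n) (hsum : ∑ j, t j = n - s) (hp : ∀ j, IsNCP (t j) (p j))
include hs1 hsn hsum hp

lemma sF_asm : sF (asm s t p) = s := by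
  rw [sF, blk0_asm hs1 hsn hsum hp, card_B0A]

lemma bF_asm (j : Fin (sF (asm s t p))) : bF (asm s t p) j = bb s t (j : ℕ) := by
  have hsA := sF_asm (t := t) (p := p) hs1 hsn hsum hp
  have hmem : ∀ i : Fin (sF (asm s t p)), bb s t (i : ℕ) ∈ blk0 (asm s t p) := by
    intro i
    rw [blk0_asm hs1 hsn hsum hp, B0A]
    exact Finset.mem_image_of_mem _ (Finset.mem_range.2 (by have := i.isLt; omega))
  have hmono : StrictMono (fun i : Fin (sF (asm s t p)) => bb s t (i : ℕ)) := by
    intro a b hab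
    exact bb_strictMono t (by exact_mod_cast hab)
  have := Finset.orderEmbOfFin_unique (rfl : (blk0 (asm s t p)).card = sF (asm s t p))
    hmem hmono
  exact (congrFun this j).symm

lemma bNF_asm {i : ℕ} (hi : i ≤ sF (asm s t p)) : bNF n (asm s t p) i = bb s t i := by
  have hsA := sF_asm (t := t) (p := p) hs1 hsn hsum hp
  rcases Nat.lt_or_ge i (sF (asm s t p)) with hlt | hge
  · rw [bNF_of_lt hlt, bF_asm hs1 hsn hsum hp]
  · have : i = s := by omega
    subst this
    rw [bNF, dif_neg (by omega), bb_last t hsum hsn]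

lemma tF_asm (j : Fin (sF (asm s t p))) :
    tF n (asm s t p) j = t (Fin.cast (sF_asm hs1 hsn hsum hp) j) := by
  have hsA := sF_asm (t := t) (p := p) hs1 hsn hsum hp
  rw [tF, bF_asm hs1 hsn hsum hp, bNF_asm hs1 hsn hsum hp (by have := j.isLt; omega)]
  have h1 := bb_succ t (j : ℕ)
  have h2 : tte s t (j : ℕ) = t (Fin.cast (sF_asm hs1 hsn hsum hp) j) := by
    simp [tte, show (j : ℕ) < s by have := j.isLt; omega]
    rfl
  omega

lemma pF_asm (j : Fin (sF (asm s t p))) :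
    pF n (asm s t p) j = p (Fin.cast (sF_asm hs1 hsn hsum hp) j) := by
  have hsA := sF_asm (t := t) (p := p) hs1 hsn hsum hp
  set j' : Fin s := Fin.cast (sF_asm hs1 hsn hsum hp) j with hj'
  have hjj : (j : ℕ) = (j' : ℕ) := rfl
  rw [pF, bF_asm hs1 hsn hsum hp, bNF_asm hs1 hsn hsum hp (by have := j.isLt; omega)]
  have hfil : (asm s t p).filter (· ⊆ Finset.Ioo (bb s t (j : ℕ)) (bb s t ((j : ℕ) + 1)))
      = shiftP (bb s t (j' : ℕ) + 1) (p j') := filter_asm hs1 hp j'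
  rw [hfil, ← hjj, unshift_shiftP]

lemma fwd_asm : fwd n (asm s t p) = ⟨s, t, p⟩ := by
  exact sigma3_ext (sF_asm hs1 hsn hsum hp) (tF_asm hs1 hsn hsum hp)
    (pF_asm hs1 hsn hsum hp)

end Inv2
section Final

/-- the indexing set of the decomposition -/
def Sset (n : ℕ) : Finset ((s : ℕ) × (_ : Fin s → ℕ) × (Fin s → PartData)) :=
  (Finset.Icc 1 n).sigma fun s => (Finset.Nat.antidiagonalTuple s (n - s)).sigma
    fun t => Fintype.piFinset fun j => NCset (t j)

lemma mem_Sset {n : ℕ} {x : (s : ℕ) × (_ : Fin s → ℕ) × (Fin s → PartData)} :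
    x ∈ Sset n ↔ (1 ≤ x.1 ∧ x.1 ≤ n) ∧ (∑ j, x.2.1 j = n - x.1) ∧
      ∀ j, IsNCP (x.2.1 j) (x.2.2 j) := by
  obtain ⟨s, t, p⟩ := x
  simp only [Sset, Finset.mem_sigma, Finset.mem_Icc, Finset.Nat.mem_antidiagonalTuple,
    Fintype.mem_piFinset]
  constructor
  · rintro ⟨⟨h1, h2⟩, h3, h4⟩
    exact ⟨⟨h1, h2⟩, h3, fun j => mem_NCset.1 (h4 j)⟩
  · rintro ⟨⟨h1, h2⟩, h3, h4⟩
    exact ⟨⟨h1, h2⟩, h3, fun j => mem_NCset.2 (h4 j)⟩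

lemma NC_identity {K : Type*} [CommRing K] (k : ℕ → K) {n : ℕ} (hn : 1 ≤ n) :
    ∑ P ∈ NCset n, ∏ B ∈ P, k B.card
      = ∑ s ∈ Finset.Icc 1 n, ∑ t ∈ Finset.Nat.antidiagonalTuple s (n - s),
          k s * ∏ j, ∑ P ∈ NCset (t j), ∏ B ∈ P, k B.card := by
  have step1 : ∀ s ∈ Finset.Icc 1 n, ∑ t ∈ Finset.Nat.antidiagonalTuple s (n - s),
      k s * ∏ j, ∑ P ∈ NCset (t j), ∏ B ∈ P, k B.card
      = ∑ t ∈ Finset.Nat.antidiagonalTuple s (n - s),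
          ∑ p ∈ Fintype.piFinset (fun j => NCset (t j)),
            k s * ∏ j, ∏ B ∈ p j, k B.card := by
    intro s _
    exact Finset.sum_congr rfl fun t _ => by rw [Finset.prod_univ_sum, Finset.mul_sum]
  rw [Finset.sum_congr rfl step1]
  have step2 : ∀ s ∈ Finset.Icc 1 n, ∑ t ∈ Finset.Nat.antidiagonalTuple s (n - s),
      ∑ p ∈ Fintype.piFinset (fun j => NCset (t j)), k s * ∏ j, ∏ B ∈ p j, k B.card
      = ∑ y ∈ (Finset.Nat.antidiagonalTuple s (n - s)).sigma
          (fun t => Fintype.piFinset fun j => NCset (t j)),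
            k s * ∏ j, ∏ B ∈ y.2 j, k B.card := by
    intro s _
    exact Finset.sum_sigma' _ _ _
  rw [Finset.sum_congr rfl step2, Finset.sum_sigma']
  -- now a single sum over Sset n; apply the bijection
  symm
  refine Finset.sum_bij' (fun x _ => asm x.1 x.2.1 x.2.2) (fun P _ => fwd n P)
    ?_ ?_ ?_ ?_ ?_
  · -- asm lands in NCset n
    intro x hx
    obtain ⟨⟨h1, h2⟩, h3, h4⟩ := mem_Sset.1 hx
    exact mem_NCset.2 (isNCP_asm h1 h2 h3 h4)
  · -- fwd lands in Sset n
    intro P hP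
    have h := mem_NCset.1 hP
    refine mem_Sset.2 ⟨⟨sF_pos h hn, sF_le h hn⟩, sum_tF h hn, fun j => pF_isNCP h hn j⟩
  · -- fwd ∘ asm = id
    intro x hx
    obtain ⟨⟨h1, h2⟩, h3, h4⟩ := mem_Sset.1 hx
    obtain ⟨s, t, p⟩ := x
    exact fwd_asm h1 h2 h3 h4
  · -- asm ∘ fwd = id
    intro P hP
    exact asm_fwd (mem_NCset.1 hP) hn
  · -- values agree
    intro x hx
    obtain ⟨⟨h1, h2⟩, h3, h4⟩ := mem_Sset.1 hx
    exact (prod_asm k h1 h4).symm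

end Final
end FMC


/-- the free moment–cumulant relation.
If `m₀ = 1` and `mₙ = Σ_{s=1}^{n} Σ_{i₁+⋯+i_s = n-s} k_s m_{i₁} ⋯ m_{i_s}` for `n ≥ 1`,
then `mₙ = Σ_{L ∈ NC_n} Π_{B block of L} k_{|B|}` for all `n ≥ 1`. -/
theorem free_moment_cumulant_relation (K : Type*) [CommRing K] (k m : ℕ → K)
    (hm0 : m 0 = 1)
    (hrec : ∀ n : ℕ, 1 ≤ n →
      m n = ∑ s ∈ Finset.Icc 1 n, ∑ t ∈ Finset.Nat.antidiagonalTuple s (n - s),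
        k s * ∏ j, m (t j)) :
    ∀ n : ℕ, 1 ≤ n → m n = ∑ P ∈ NCset n, ∏ B ∈ P, k B.card := by
  intro n
  induction n using Nat.strong_induction_on with
  | _ n ih =>
    intro hn
    rw [hrec n hn, FMC.NC_identity k hn]
    apply Finset.sum_congr rfl
    intro s hs
    apply Finset.sum_congr rfl
    intro t ht
    congr 1
    apply Finset.prod_congr rfl
    intro j _
    rcases Nat.eq_zero_or_pos (t j) with h0 | hpos
    · rw [h0, hm0, FMC.NCset_zero]; simp
    · have hs1 : 1 ≤ s := (Finset.mem_Icc.1 hs).1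
      have hsum : ∑ i, t i = n - s := Finset.Nat.mem_antidiagonalTuple.1 ht
      have htj : t j ≤ n - s :=
        hsum ▸ Finset.single_le_sum (fun i _ => Nat.zero_le _) (Finset.mem_univ j)
      exact ih (t j) (by omega) hpos
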